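/- Let g : ℝⁿ → ℝ be of class C^r on a neighbourhood U of a point x̄, and let Σ ⊆ ℝⁿ be a set such that the r-th Taylor polynomial of g at every point z ∈ Σ ∩ U is identically zero. Then there exist positive constants c and δ such that |g(x)| ≤ c · dist(x, Σ)^r for all x in the closed ball of radius δ around x̄. -/

import Mathlib

open Filter Metric Set Topology

/-- Taylor-vanishing lemma: if all derivatives of `g` of orders `0` through `r` vanish on
`S ∩ U`, then `|g x| ≤ c · dist(x, S)^r` near `xbar`. -/
theorem stmt_0 {n : ℕ} (r : ℕ) (g : EuclideanSpace ℝ (Fin n) → ℝ)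
    (S U : Set (EuclideanSpace ℝ (Fin n))) (hS : S.Nonempty)
    (hU : IsOpen U) (xbar : EuclideanSpace ℝ (Fin n)) (hx : xbar ∈ U)
    (hg : ContDiffOn ℝ r g U)
    (hT : ∀ z ∈ S ∩ U, ∀ j ≤ r, iteratedFDeriv ℝ j g z = 0) :
    ∃ c > (0 : ℝ), ∃ δ > (0 : ℝ), ∀ x ∈ Metric.closedBall xbar δ,
      |g x| ≤ c * Metric.infDist x S ^ r := by
  obtain ⟨δ0, hδ0, hball⟩ : ∃ δ0 > 0, Metric.closedBall xbar (2 * δ0) ⊆ U := by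
    obtain ⟨ε, hε, hsub⟩ := Metric.isOpen_iff.1 hU xbar hx
    exact ⟨ε / 4, by linarith, fun z hz =>
      hsub (lt_of_le_of_lt (mem_closedBall.1 hz) (by linarith))⟩
  set C := Metric.closedBall xbar (2 * δ0) with hCdef
  have hCU : C ⊆ U := hball
  have hCconv : Convex ℝ C := convex_closedBall _ _
  have hCcomp : IsCompact C := isCompact_closedBall _ _
  -- continuity of the iterated derivatives on `U`
  have hcont : ∀ j : ℕ, j ≤ r → ContinuousOn (iteratedFDeriv ℝ j g) U := by
    intro j hj
    have h1 := hg.continuousOn_iteratedFDerivWithin (by exact_mod_cast hj) hU.uniqueDiffOn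
    exact h1.congr fun w hw => (iteratedFDerivWithin_of_isOpen j hU hw).symm
  -- differentiability of the iterated derivatives on `U`
  have hdiff : ∀ m : ℕ, m < r → ∀ z ∈ U, DifferentiableAt ℝ (iteratedFDeriv ℝ m g) z := by
    intro m hm z hz
    have h1 : DifferentiableOn ℝ (iteratedFDerivWithin ℝ m g U) U :=
      hg.differentiableOn_iteratedFDerivWithin (by exact_mod_cast hm) hU.uniqueDiffOn
    have h2 : DifferentiableAt ℝ (iteratedFDerivWithin ℝ m g U) z :=
      (h1 z hz).differentiableAt (hU.mem_nhds hz)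
    apply h2.congr_of_eventuallyEq
    filter_upwards [hU.mem_nhds hz] with w hw
    exact (iteratedFDerivWithin_of_isOpen m hU hw).symm
  -- a uniform bound on all derivatives of order `≤ r` on `C`
  obtain ⟨M, hM⟩ := hCcomp.exists_bound_of_continuousOn
    (f := fun x => ∑ j ∈ Finset.range (r + 1), ‖iteratedFDeriv ℝ j g x‖)
    (by
      apply continuousOn_finset_sum
      intro j hj
      exact (((hcont j (by simpa [Nat.lt_succ_iff] using hj)).mono hCU).norm))
  set K := max M 0 with hKdef
  have hK0 : (0 : ℝ) ≤ K := le_max_right M 0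
  have hK : ∀ j ≤ r, ∀ x ∈ C, ‖iteratedFDeriv ℝ j g x‖ ≤ K := by
    intro j hj x hxC
    have h1 : ‖iteratedFDeriv ℝ j g x‖ ≤
        ∑ i ∈ Finset.range (r + 1), ‖iteratedFDeriv ℝ i g x‖ :=
      Finset.single_le_sum (f := fun i => ‖iteratedFDeriv ℝ i g x‖) (fun i _ => norm_nonneg _)
        (Finset.mem_range.2 (Nat.lt_succ_of_le hj))
    have h2 := hM x hxC
    rw [Real.norm_eq_abs] at h2
    exact h1.trans ((le_abs_self _).trans (h2.trans (le_max_left M 0)))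
  -- key estimate by induction: vanishing derivatives at `y ∈ S ∩ C` force decay
  have key : ∀ y, y ∈ S → y ∈ C → ∀ j, j ≤ r → ∀ x, x ∈ C →
      ‖iteratedFDeriv ℝ (r - j) g x‖ ≤ K * ‖x - y‖ ^ j := by
    intro y hyS hyC j
    induction j with
    | zero => intro _ x hxC; simpa using hK r le_rfl x hxC
    | succ j ih =>
      intro hj x hxC
      have hj' : j ≤ r := by omega
      have hseg : segment ℝ y x ⊆ C := hCconv.segment_subset hyC hxC
      have hm : r - (j + 1) < r := by omega
      have heq : r - (j + 1) + 1 = r - j := by omega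
      have hdiff' : ∀ z ∈ segment ℝ y x,
          DifferentiableAt ℝ (iteratedFDeriv ℝ (r - (j + 1)) g) z :=
        fun z hz => hdiff _ hm z (hCU (hseg hz))
      have hbound : ∀ z ∈ segment ℝ y x,
          ‖fderiv ℝ (iteratedFDeriv ℝ (r - (j + 1)) g) z‖ ≤ K * ‖x - y‖ ^ j := by
        intro z hz
        have h1 : ‖fderiv ℝ (iteratedFDeriv ℝ (r - (j + 1)) g) z‖ =
            ‖iteratedFDeriv ℝ (r - j) g z‖ := by
          rw [← heq]
          conv_rhs => rw [iteratedFDeriv_succ_eq_comp_left]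
          simp
          exact ((continuousMultilinearCurryLeftEquiv ℝ (fun _ => EuclideanSpace ℝ (Fin n)) ℝ).symm.norm_map _).symm
        rw [h1]
        have h2 := ih hj' z (hseg hz)
        refine h2.trans ?_
        have hzy : ‖z - y‖ ≤ ‖x - y‖ := by
          obtain ⟨a, b, ha, hb, hab, rfl⟩ := hz
          have hae : a = 1 - b := by linarith
          have he : a • y + b • x - y = b • (x - y) := by
            subst hae; module
          rw [he, norm_smul, Real.norm_eq_abs, abs_of_nonneg hb]
          nlinarith [norm_nonneg (x - y)]
        exact mul_le_mul_of_nonneg_left (pow_le_pow_left₀ (norm_nonneg _) hzy j) hK0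
      have hy0 : iteratedFDeriv ℝ (r - (j + 1)) g y = 0 :=
        hT y ⟨hyS, hCU hyC⟩ _ (by omega)
      have hmain := (convex_segment y x).norm_image_sub_le_of_norm_fderiv_le
        hdiff' hbound (left_mem_segment ℝ y x) (right_mem_segment ℝ y x)
      rw [hy0] at hmain
      simp only [sub_zero] at hmain
      calc ‖iteratedFDeriv ℝ (r - (j + 1)) g x‖ ≤ K * ‖x - y‖ ^ j * ‖x - y‖ := hmain
        _ = K * ‖x - y‖ ^ (j + 1) := by ring
  -- conclusion
  refine ⟨(K + 1) * (1 / δ0 ^ r + 1), by positivity, δ0, hδ0, ?_⟩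
  intro x hxball
  have hxC : x ∈ C := Metric.closedBall_subset_closedBall (by linarith) hxball
  set d := Metric.infDist x S with hd
  have hd0 : 0 ≤ d := Metric.infDist_nonneg
  have hgx : |g x| = ‖iteratedFDeriv ℝ 0 g x‖ := by
    rw [norm_iteratedFDeriv_zero, Real.norm_eq_abs]
  have hδ0r : (0 : ℝ) < δ0 ^ r := pow_pos hδ0 r
  by_cases hcase : d < δ0
  · have hbd : |g x| ≤ K * d ^ r := by
      have hev : ∀ ε ∈ Set.Ioo (0 : ℝ) (δ0 - d), |g x| ≤ K * (d + ε) ^ r := by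
        intro ε hε
        obtain ⟨y, hyS, hy⟩ := (Metric.infDist_lt_iff hS).1
          (show Metric.infDist x S < d + ε by rw [← hd]; linarith [hε.1])
        have hyC : y ∈ C := by
          have h1 : dist y xbar ≤ dist y x + dist x xbar := dist_triangle _ _ _
          have h2 : dist x xbar ≤ δ0 := hxball
          have h3 : dist y x < δ0 := by
            rw [dist_comm]; exact hy.trans_le (by linarith [hε.2])
          exact mem_closedBall.2 (by linarith)
        have hkey := key y hyS hyC r le_rfl x hxC
        rw [Nat.sub_self] at hkey
        rw [hgx]
        refine hkey.trans (mul_le_mul_of_nonneg_left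
          (pow_le_pow_left₀ (norm_nonneg _) (by rw [← dist_eq_norm]; exact hy.le) r) hK0)
      have htend : Tendsto (fun ε : ℝ => K * (d + ε) ^ r) (𝓝[>] 0) (𝓝 (K * d ^ r)) := by
        have hc : Continuous fun ε : ℝ => K * (d + ε) ^ r :=
          continuous_const.mul ((continuous_const.add continuous_id).pow r)
        have h2 : Tendsto (fun ε : ℝ => K * (d + ε) ^ r) (𝓝[>] 0) (𝓝 (K * (d + 0) ^ r)) :=
          (hc.tendsto 0).mono_left (nhdsWithin_le_nhds (s := Set.Ioi (0:ℝ)))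
        simpa using h2
      refine ge_of_tendsto htend ?_
      filter_upwards [Ioo_mem_nhdsGT_of_mem (by constructor <;> [rfl; linarith] : (0:ℝ) ∈ Set.Ico 0 (δ0 - d))] with ε hε
      exact hev ε hε
    refine hbd.trans ?_
    have h1 : (0 : ℝ) ≤ 1 / δ0 ^ r := by positivity
    nlinarith [pow_nonneg hd0 r, mul_nonneg (mul_nonneg hK0 h1) (pow_nonneg hd0 r),
      mul_nonneg h1 (pow_nonneg hd0 r)]
  · push_neg at hcase
    have h1 : |g x| ≤ K := by rw [hgx]; exact hK 0 (Nat.zero_le r) x hxC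
    have h2 : δ0 ^ r ≤ d ^ r := pow_le_pow_left₀ (le_of_lt hδ0) hcase r
    have h3 : (1 : ℝ) ≤ d ^ r / δ0 ^ r := (one_le_div hδ0r).2 h2
    calc |g x| ≤ K := h1
      _ ≤ (K + 1) * (d ^ r / δ0 ^ r) := by nlinarith
      _ = (K + 1) * (1 / δ0 ^ r) * d ^ r := by ring
      _ ≤ (K + 1) * (1 / δ0 ^ r + 1) * d ^ r := by
          have h4 : (0 : ℝ) ≤ d ^ r := pow_nonneg hd0 r
          have h5 : (0 : ℝ) ≤ 1 / δ0 ^ r := by positivity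
          nlinarith
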